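/- arXiv:1810.02602 — 2 statements merged into one kernel-verified Lean document; each statement's English description precedes it below -/
import Mathlib

section
/- Let G be a simple graph in which every card is ds-completable, let v be a vertex of degree d such that some vertex has degree d−1, let α be the set of vertices of degree d−1, and let a = |N(v) ∩ α|. Then the number of stubs on α satisfies (d−1)|α| ≥ (d−a)|α| + 2a(|α|−a) + a(a−1) + a, which forces |α| ≤ a²/(a+1) < a, a contradiction; hence no such graph exists. -/
open SimpleGraph Finset
open scoped Classical

variable {V : Type*}

/-- The degree of a vertex `u` in a simple graph `G`. -/
noncomputable def deg (G : SimpleGraph V) (u : V) : ℕ := (G.neighborSet u).ncard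

/-- The degree of `u` in the card `G − v` (the vertex-deleted subgraph at `v`). -/
noncomputable def cardDeg (G : SimpleGraph V) (v u : V) : ℕ := (G.neighborSet u \ {v}).ncard

/-- The card `G − v` is ds-completable: for each degree `d`, the vertices of degree `d`
in `G − v` are either all neighbours of `v` in `G` or all non-neighbours of `v` in `G`. -/
def DsCompletable (G : SimpleGraph V) (v : V) : Prop :=
  ∀ d : ℕ, (∀ u, u ≠ v → cardDeg G v u = d → G.Adj v u) ∨
           (∀ u, u ≠ v → cardDeg G v u = d → ¬ G.Adj v u)

/-- A vertex is bad if the graph contains a vertex of degree one less. -/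
def Bad (G : SimpleGraph V) (v : V) : Prop := ∃ w, deg G w + 1 = deg G v

/-- A vertex is dull if the graph contains a vertex of degree one more. -/
def Dull (G : SimpleGraph V) (v : V) : Prop := ∃ w, deg G w = deg G v + 1

/-- ε(s,t): the number of stubs on `s` used by edges from `s` to `t`
(for disjoint `s`, `t` this is the number of edges between them; for `s = t`
it is twice the number of edges inside `s`). -/
noncomputable def stubs (G : SimpleGraph V) (s t : Finset V) : ℕ :=
  ((s ×ˢ t).filter fun p => G.Adj p.1 p.2).card

/-- A vertex set is neighbourly if no vertex outside the set has a degree one less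
than that of a vertex in the set. -/
def Neighbourly (G : SimpleGraph V) (K : Finset V) : Prop :=
  ∀ u ∉ K, ∀ w ∈ K, deg G u + 1 ≠ deg G w

/-- A vertex set is `d`-neighbourly if it contains a vertex `v` of degree `d` such that
no vertex outside the set has a degree one less than that of any member other than `v`. -/
def DNeighbourly (G : SimpleGraph V) (d : ℕ) (K : Finset V) : Prop :=
  ∃ v ∈ K, deg G v = d ∧ ∀ u ∉ K, ∀ w ∈ K, w ≠ v → deg G u + 1 ≠ deg G w

lemma deg_eq [Fintype V] (G : SimpleGraph V) (u : V) :
    deg G u = (univ.filter (G.Adj u)).card := by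
  simp [deg, Set.ncard_eq_toFinset_card', SimpleGraph.neighborSet, Set.toFinset_setOf]

lemma cardDeg_of_adj {G : SimpleGraph V} {x u : V} [Fintype V] (h : G.Adj u x) :
    cardDeg G x u + 1 = deg G u := by
  have hx : x ∈ G.neighborSet u := h
  simpa [cardDeg, deg] using Set.ncard_diff_singleton_add_one hx (Set.toFinite _)

lemma cardDeg_of_not_adj {G : SimpleGraph V} {x u : V} (h : ¬ G.Adj u x) :
    cardDeg G x u = deg G u := by
  have hx : x ∉ G.neighborSet u := h
  simp [cardDeg, deg, Set.diff_singleton_eq_self hx]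

lemma adj_of_cardDeg_eq {G : SimpleGraph V} {x u u' : V} (h : DsCompletable G x)
    (hu : u ≠ x) (hu' : u' ≠ x) (hcd : cardDeg G x u' = cardDeg G x u)
    (hadj : G.Adj x u) : G.Adj x u' := by
  rcases h (cardDeg G x u) with hA | hB
  · exact hA u' hu' hcd
  · exact absurd hadj (hB u hu rfl)

lemma stubs_mono_right (G : SimpleGraph V) {s t t' : Finset V} (h : t ⊆ t') :
    stubs G s t ≤ stubs G s t' :=
  Finset.card_le_card (Finset.filter_subset_filter _
    (Finset.product_subset_product (Finset.Subset.refl s) h))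

lemma stubs_union_right (G : SimpleGraph V) {s t₁ t₂ : Finset V} (hdis : Disjoint t₁ t₂) :
    stubs G s (t₁ ∪ t₂) = stubs G s t₁ + stubs G s t₂ := by
  classical
  unfold stubs
  rw [Finset.product_union, Finset.filter_union, Finset.card_union_of_disjoint]
  refine Finset.disjoint_left.2 fun p hp hp' => ?_
  simp only [Finset.mem_filter, Finset.mem_product] at hp hp'
  exact (Finset.disjoint_left.1 hdis) hp.1.2 hp'.1.2

lemma stubs_eq_sum [Fintype V] (G : SimpleGraph V) (A : Finset V) :
    stubs G A univ = ∑ u ∈ A, deg G u := by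
  classical
  unfold stubs
  rw [Finset.card_eq_sum_card_fiberwise (f := Prod.fst) (t := A)
    (fun p hp => by simp only [Finset.mem_coe, Finset.mem_filter, Finset.mem_product] at hp; exact hp.1.1)]
  refine Finset.sum_congr rfl fun u hu => ?_
  rw [deg_eq]
  have : (((A ×ˢ univ).filter fun p => G.Adj p.1 p.2).filter fun p => p.1 = u)
      = {u} ×ˢ (univ.filter (G.Adj u)) := by
    ext ⟨a, b⟩
    simp only [Finset.mem_filter, Finset.mem_product, Finset.mem_singleton, Finset.mem_univ,
      true_and, and_true]
    constructor
    · rintro ⟨⟨-, hab⟩, rfl⟩; exact ⟨rfl, hab⟩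
    · rintro ⟨rfl, hab⟩; exact ⟨⟨hu, hab⟩, rfl⟩
  rw [this, Finset.card_product, Finset.card_singleton, one_mul]

/-- There is no graph in which every card is ds-completable and some vertex is bad:
the stub-counting on the set α of vertices of degree `d_v − 1` yields a contradiction. -/
theorem stmt9 [Fintype V] (G : SimpleGraph V)
    (h : ∀ u : V, DsCompletable G u) (v w : V) (hw : deg G w + 1 = deg G v) :
    False := by
  classical
  set d := deg G v with hd
  set A : Finset V := univ.filter (fun u => deg G u + 1 = d) with hA
  have hwA : w ∈ A := by simp [hA, hw]
  have hvA : v ∉ A := by simp [hA, hd]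
  set Nv : Finset V := univ.filter (fun u => G.Adj v u) with hNv
  set B : Finset V := A.filter (fun u => G.Adj v u) with hB
  set C : Finset V := Nv \ A with hC
  have hBA : B ⊆ A := Finset.filter_subset _ _
  -- claim 1 : every neighbour of v outside A is adjacent to all of A
  have claim1 : ∀ x ∈ C, ∀ u ∈ A, G.Adj u x := by
    intro x hx u hu
    have hx' := hx
    simp only [hC, Finset.mem_sdiff, hNv, Finset.mem_filter, Finset.mem_univ, true_and] at hx'
    obtain ⟨hvx, hxA⟩ := hx'
    simp only [hA, Finset.mem_filter, Finset.mem_univ, true_and] at hu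
    by_contra hne
    have hxu : u ≠ x := by rintro rfl; exact hxA (by simp [hA, hu])
    have h1 : cardDeg G x v + 1 = d := by rw [cardDeg_of_adj hvx]
    have h2 : cardDeg G x u + 1 = d := by rw [cardDeg_of_not_adj hne, hu]
    have := adj_of_cardDeg_eq (h x) hvx.ne hxu (by omega) hvx.symm
    exact hne this.symm
  -- claim 2 : every member of B is adjacent to every other member of A
  have claim2 : ∀ u ∈ B, ∀ u' ∈ A, u' ≠ u → G.Adj u u' := by
    intro u hu u' hu' hne'
    simp only [hB, Finset.mem_filter] at hu
    obtain ⟨huA, hvu⟩ := hu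
    simp only [hA, Finset.mem_filter, Finset.mem_univ, true_and] at hu'
    by_contra hne
    have h1 : cardDeg G u v + 1 = d := by rw [cardDeg_of_adj hvu]
    have h2 : cardDeg G u u' + 1 = d := by
      rw [cardDeg_of_not_adj (fun hh => hne hh.symm), hu']
    have := adj_of_cardDeg_eq (h u) hvu.ne hne' (by omega) hvu.symm
    exact hne this
  -- notation
  set k := A.card with hk
  set a := B.card with ha
  set m := (A \ B).card with hm
  set c := C.card with hc
  have hma : m + a = k := Finset.card_sdiff_add_card_eq_card hBA
  have hca : c + a = d := by
    have h1 : (Nv ∩ A).card + (Nv \ A).card = Nv.card := Finset.card_inter_add_card_sdiff _ _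
    have h2 : Nv ∩ A = B := by
      ext u
      simp only [hNv, hB, Finset.mem_inter, Finset.mem_filter, Finset.mem_univ, true_and]
      tauto
    have h3 : Nv.card = d := by rw [hNv, hd, deg_eq]
    rw [h2, h3, ← hC] at h1
    omega
  set S := stubs G A univ with hS
  have hsum : S + k = k * d := by
    rw [hS, stubs_eq_sum]
    have hdegs : ∀ u ∈ A, deg G u + 1 = d := fun u hu => by
      simp only [hA, Finset.mem_filter, Finset.mem_univ, true_and] at hu; exact hu
    calc (∑ u ∈ A, deg G u) + k = ∑ u ∈ A, (deg G u + 1) := by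
          rw [Finset.sum_add_distrib, Finset.sum_const, smul_eq_mul, mul_one]
      _ = ∑ _u ∈ A, d := Finset.sum_congr rfl hdegs
      _ = k * d := by rw [Finset.sum_const, smul_eq_mul]
  have hvC : v ∉ C := by
    simp only [hC, Finset.mem_sdiff, hNv, Finset.mem_filter, Finset.mem_univ, true_and]
    rintro ⟨hadj, -⟩
    exact G.irrefl hadj
  have hsplit : stubs G A C + stubs G A A + stubs G A {v} ≤ S := by
    have h1 : Disjoint C A := Finset.sdiff_disjoint
    have h2 : Disjoint (C ∪ A) {v} := by
      simp only [Finset.disjoint_singleton_right, Finset.mem_union]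
      push_neg
      exact ⟨hvC, hvA⟩
    calc stubs G A C + stubs G A A + stubs G A {v}
        = stubs G A (C ∪ A ∪ {v}) := by rw [stubs_union_right G h2, stubs_union_right G h1]
      _ ≤ S := stubs_mono_right G (Finset.subset_univ _)
  have hC1 : stubs G A C = k * c := by
    have hfil : ((A ×ˢ C).filter fun p => G.Adj p.1 p.2) = A ×ˢ C :=
      Finset.filter_true_of_mem fun p hp => by
        rw [Finset.mem_product] at hp
        exact claim1 p.2 hp.2 p.1 hp.1
    unfold stubs
    rw [hfil, Finset.card_product]
  have hCv : stubs G A {v} = a := by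
    have hfil : ((A ×ˢ {v}).filter fun p => G.Adj p.1 p.2) = B ×ˢ {v} := by
      ext ⟨x, y⟩
      simp only [Finset.mem_filter, Finset.mem_product, Finset.mem_singleton, hB]
      constructor
      · rintro ⟨⟨hxA, rfl⟩, hadj⟩; exact ⟨⟨hxA, hadj.symm⟩, rfl⟩
      · rintro ⟨⟨hxA, hadj⟩, rfl⟩; exact ⟨⟨hxA, rfl⟩, hadj.symm⟩
    unfold stubs
    rw [hfil, Finset.card_product, Finset.card_singleton, mul_one]
  have hsubAA : (A \ B).offDiag ⊆ A.offDiag := by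
    intro p hp
    rw [Finset.mem_offDiag] at hp ⊢
    exact ⟨Finset.sdiff_subset hp.1, Finset.sdiff_subset hp.2.1, hp.2.2⟩
  have hAA : A.offDiag.card ≤ stubs G A A + (A \ B).offDiag.card := by
    have hsub : A.offDiag \ (A \ B).offDiag ⊆ (A ×ˢ A).filter fun p => G.Adj p.1 p.2 := by
      intro p hp
      rw [Finset.mem_sdiff, Finset.mem_offDiag] at hp
      obtain ⟨⟨h1, h2, h3⟩, h4⟩ := hp
      rw [Finset.mem_filter, Finset.mem_product]
      refine ⟨⟨h1, h2⟩, ?_⟩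
      have hor : p.1 ∈ B ∨ p.2 ∈ B := by
        by_contra hcon
        push_neg at hcon
        exact h4 (Finset.mem_offDiag.2 ⟨Finset.mem_sdiff.2 ⟨h1, hcon.1⟩,
          Finset.mem_sdiff.2 ⟨h2, hcon.2⟩, h3⟩)
      rcases hor with hb | hb
      · exact claim2 p.1 hb p.2 h2 (Ne.symm h3)
      · exact (claim2 p.2 hb p.1 h1 h3).symm
    have h1 := Finset.card_le_card hsub
    rw [Finset.card_sdiff_of_subset hsubAA] at h1
    have h2 := Finset.card_le_card hsubAA
    unfold stubs
    omega
  have hk1 : 1 ≤ k := Finset.card_pos.2 ⟨w, hwA⟩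
  have hkk : k ≤ k * k := Nat.le_mul_of_pos_left k hk1
  have hmm : m ≤ m * m := by
    rcases Nat.eq_zero_or_pos m with hm0 | hm0
    · simp [hm0]
    · exact Nat.le_mul_of_pos_left m hm0
  have hoA : A.offDiag.card + k = k * k := by
    rw [Finset.offDiag_card, Nat.sub_add_cancel hkk]
  have hoM : (A \ B).offDiag.card + m = m * m := by
    rw [Finset.offDiag_card, Nat.sub_add_cancel hmm]
  have hmk : m ≤ k := by omega
  have hmmk : m * m ≤ m * k := Nat.mul_le_mul_left m hmk
  nlinarith [hsum, hsplit, hC1, hCv, hAA, hoA, hoM, hma, hca, hk1, hmmk,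
    Nat.mul_le_mul_left k hca.le]
end

section
/- Let G be a simple graph with no ds-completable card such that the maximum degree over good vertices exceeds n − 1 − κ₁ − x, where n = |V(G)|, κ₁ is the number of vertices of degree 1, and x = 1 if G has no vertex of degree 2 and x = 0 otherwise. Then this situation is impossible; i.e., if some good vertex has degree greater than n − 1 − κ₁ − x, then G has a ds-completable card. -/
open SimpleGraph Finset
open scoped Classical

variable {V : Type*}

lemma cardDeg_adj [Fintype V] (G : SimpleGraph V) {w u : V} (h : G.Adj w u) :
    cardDeg G w u + 1 = deg G u := by
  rw [cardDeg, deg, Set.ncard_diff_singleton_add_one (by simpa using h.symm) (Set.toFinite _)]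

lemma cardDeg_not_adj [Fintype V] (G : SimpleGraph V) {w u : V} (h : ¬ G.Adj w u) :
    cardDeg G w u = deg G u := by
  rw [cardDeg, Set.diff_singleton_eq_self (by simpa using fun hh => h (G.adj_symm hh))]
  rfl

lemma cardDeg_le_deg [Fintype V] (G : SimpleGraph V) (w u : V) :
    cardDeg G w u ≤ deg G u :=
  Set.ncard_le_ncard Set.diff_subset (Set.toFinite _)

lemma deg_eq_degree [Fintype V] (G : SimpleGraph V) (u : V) : deg G u = G.degree u := by
  rw [deg, ← SimpleGraph.card_neighborSet_eq_degree, ← Nat.card_eq_fintype_card,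
    Nat.card_coe_set_eq]

lemma aux_completable [Fintype V] (G : SimpleGraph V) (w : V)
    (hw : ∀ u, u ≠ w → deg G u = 1 ∨ 2 ≤ cardDeg G w u)
    (huniq : ∀ u₁ u₂, u₁ ≠ w → u₂ ≠ w → 2 ≤ cardDeg G w u₁ → 2 ≤ cardDeg G w u₂ →
      u₁ = u₂) : DsCompletable G w := by
  intro d
  match d with
  | 0 =>
    left
    intro u hu hcd
    rcases hw u hu with h1 | h2
    · by_contra hadj
      rw [cardDeg_not_adj G hadj] at hcd
      omega
    · omega
  | 1 =>
    right
    intro u hu hcd hadj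
    rcases hw u hu with h1 | h2
    · have := cardDeg_adj G hadj; omega
    · omega
  | (d+2) =>
    by_cases hex : ∃ z, z ≠ w ∧ cardDeg G w z = d + 2 ∧ G.Adj w z
    · left; intro u hu hcd
      obtain ⟨z, hz, hzd, hza⟩ := hex
      have : u = z := huniq u z hu hz (by omega) (by omega)
      rwa [this]
    · right; intro u hu hcd hadj; exact hex ⟨u, hu, hcd, hadj⟩

lemma pendant_completable [Fintype V] (G : SimpleGraph V) (v p : V)
    (hv : ¬ Bad G v) (hadj : G.Adj v p) (hp : deg G p = 1) : DsCompletable G p := by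
  have hadj_iff : ∀ u, G.Adj p u ↔ u = v := by
    have hN : G.neighborSet p = {v} := by
      obtain ⟨a, ha⟩ := Set.ncard_eq_one.mp hp
      have hvmem : v ∈ G.neighborSet p := hadj.symm
      rw [ha] at hvmem ⊢
      simp only [Set.mem_singleton_iff] at hvmem
      rw [hvmem]
    intro u
    rw [← SimpleGraph.mem_neighborSet, hN, Set.mem_singleton_iff]
  intro d
  by_cases hd : d + 1 = deg G v
  · left; intro u hu hcd
    rw [hadj_iff]
    by_contra huv
    rw [cardDeg_not_adj G (fun hh => huv ((hadj_iff u).mp hh))] at hcd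
    exact hv ⟨u, by omega⟩
  · right; intro u hu hcd hadjpu
    have huv := (hadj_iff u).mp hadjpu
    subst huv
    have := cardDeg_adj G hadjpu
    omega

/-- If a good vertex has degree exceeding `n − 1 − κ₁ − x` (where `κ₁` is the number of
pendants and `x = 1` iff there is no vertex of degree 2), then the graph has a
ds-completable card. -/
theorem stmt18 [Fintype V] (G : SimpleGraph V) (v : V) (hv : ¬ Bad G v)
    (h : Fintype.card V < deg G v + (univ.filter fun u => deg G u = 1).card +
      (if ∀ u : V, deg G u ≠ 2 then 1 else 0) + 1) :
    ∃ u : V, DsCompletable G u := by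
  by_cases hiso : ∃ z, deg G z = 0
  · obtain ⟨z, hz⟩ := hiso
    refine ⟨z, fun d => Or.inr fun u hu hcd hadj => ?_⟩
    have : G.neighborSet z = ∅ := (Set.ncard_eq_zero (Set.toFinite _)).mp hz
    have : u ∈ G.neighborSet z := hadj
    simp_all
  push_neg at hiso
  by_cases hA : ∃ p, G.Adj v p ∧ deg G p = 1
  · obtain ⟨p, h1, h2⟩ := hA
    exact ⟨p, pendant_completable G v p hv h1 h2⟩
  push_neg at hA
  set P : Finset V := univ.filter (fun u => deg G u = 1) with hP
  by_cases hvp : deg G v = 1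
  · -- case C : v is a pendant
    obtain ⟨w, hwadj⟩ : ∃ w, G.Adj v w := by
      have hne : (G.neighborSet v).Nonempty := by
        rw [← Set.ncard_pos (Set.toFinite _)]
        change 0 < deg G v
        omega
      obtain ⟨w, hw⟩ := hne
      exact ⟨w, hw⟩
    have hw1 : deg G w ≠ 1 := hA w hwadj
    set NP : Finset V := univ.filter (fun u => ¬ deg G u = 1) with hNP
    have hPN : P.card + NP.card = Fintype.card V := by
      rw [hP, hNP]; exact Finset.card_filter_add_card_filter_not _
    have hxle : (if ∀ u : V, deg G u ≠ 2 then 1 else 0) ≤ 1 := by split <;> omega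
    have hNPle : NP.card ≤ (if ∀ u : V, deg G u ≠ 2 then 1 else 0) + 1 := by omega
    have hNP2 : NP.card ≤ 2 := by omega
    have hwNP : w ∈ NP := by simp [hNP, hw1]
    have key : ∀ u, u ≠ w → deg G u ≠ 1 → 2 ≤ cardDeg G w u := by
      intro u hu hu1
      have huNP : u ∈ NP := by simp [hNP, hu1]
      have h2NP : 2 ≤ NP.card := by
        have : {u, w} ⊆ NP := by
          intro t ht
          simp only [Finset.mem_insert, Finset.mem_singleton] at ht
          rcases ht with rfl | rfl <;> assumption
        have := Finset.card_le_card this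
        rwa [Finset.card_insert_of_notMem (by simpa using hu),
          Finset.card_singleton] at this
      have hx : ∀ t : V, deg G t ≠ 2 := by
        by_contra hx
        rw [if_neg hx] at hNPle
        omega
      have h3 : 3 ≤ deg G u := by
        have := hiso u; have := hx u; omega
      by_cases hadj : G.Adj w u
      · have := cardDeg_adj G hadj; omega
      · rw [cardDeg_not_adj G hadj]; omega
    refine ⟨w, aux_completable G w ?_ ?_⟩
    · intro u hu
      by_cases hu1 : deg G u = 1
      · exact Or.inl hu1
      · exact Or.inr (key u hu hu1)
    · intro u₁ u₂ h₁ h₂ hc₁ hc₂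
      have hd₁ : deg G u₁ ≠ 1 := by have := cardDeg_le_deg G w u₁; omega
      have hd₂ : deg G u₂ ≠ 1 := by have := cardDeg_le_deg G w u₂; omega
      have m₁ : u₁ ∈ NP.erase w := by simp [hNP, h₁, hd₁]
      have m₂ : u₂ ∈ NP.erase w := by simp [hNP, h₂, hd₂]
      have : (NP.erase w).card ≤ 1 := by
        have := Finset.card_erase_of_mem hwNP; omega
      exact Finset.card_le_one.mp this u₁ m₁ u₂ m₂
  · -- case B : v is not a pendant and has no pendant neighbour
    have hvP : v ∉ insert v P → False := by simp
    have hsub : G.neighborFinset v ⊆ univ \ insert v P := by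
      intro u hu
      rw [SimpleGraph.mem_neighborFinset] at hu
      simp only [Finset.mem_sdiff, Finset.mem_univ, Finset.mem_insert, hP,
        Finset.mem_filter, true_and]
      push_neg
      exact ⟨hu.ne', hA u hu⟩
    have hcardsd : (univ \ insert v P).card = Fintype.card V - (P.card + 1) := by
      rw [Finset.card_sdiff_of_subset (Finset.subset_univ _), Finset.card_univ,
        Finset.card_insert_of_notMem (by simp [hP, hvp])]
    have hPn : P.card + 1 ≤ Fintype.card V := by
      have := Finset.card_le_card (Finset.subset_univ (insert v P))
      rwa [Finset.card_insert_of_notMem (by simp [hP, hvp]), Finset.card_univ] at this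
    have hdd : deg G v = (G.neighborFinset v).card := by
      rw [deg_eq_degree]; rfl
    have hdegle : deg G v + (P.card + 1) ≤ Fintype.card V := by
      have := Finset.card_le_card hsub
      rw [hcardsd, ← hdd] at this
      omega
    have hx : ∀ u : V, deg G u ≠ 2 := by
      by_contra hx
      rw [if_neg hx] at h
      omega
    rw [if_pos hx] at h
    have hNv : G.neighborFinset v = univ \ insert v P := by
      apply Finset.eq_of_subset_of_card_le hsub
      rw [hcardsd, ← hdd]
      omega
    have hadj : ∀ u, u ≠ v → deg G u ≠ 1 → G.Adj v u := by
      intro u h1 h2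
      have : u ∈ univ \ insert v P := by
        simp [hP, h1, h2]
      rw [← hNv, SimpleGraph.mem_neighborFinset] at this
      exact this
    refine ⟨v, fun d => ?_⟩
    by_cases hd : d = 1
    · right
      intro u hu hcd hadjv
      have := cardDeg_adj G hadjv
      exact hx u (by omega)
    · left
      intro u hu hcd
      by_contra hna
      have h1 : deg G u = 1 := by
        by_contra h1
        exact hna (hadj u hu h1)
      rw [cardDeg_not_adj G hna] at hcd
      omega
end
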